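/- Let A be the orthogonal apartment of G_k(H) defined by an orthogonal basis {e_1,...,e_n} with 1 < k < n-1. For distinct indices i,j and i',j' with {i,j} ≠ {i',j'}: if {i,j} ∩ {i',j'} ≠ ∅ then |C_{ij} ∩ C_{i'j'}| = C(n-2, k-1), and if {i,j} ∩ {i',j'} = ∅ then |C_{ij} ∩ C_{i'j'}| = 4·C(n-4, k-2). -/

import Mathlib

open Finset

lemma aux_count {α : Type*} [Fintype α] [DecidableEq α] (k : ℕ) (T U : Finset α)
    (hTU : Disjoint T U) (hTk : T.card ≤ k) :
    (Finset.univ.filter (fun s : Finset α => s.card = k ∧ T ⊆ s ∧ Disjoint s U)).card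
      = (Fintype.card α - (T.card + U.card)).choose (k - T.card) := by
  have hsub : T ∪ U ⊆ Finset.univ := Finset.subset_univ _
  have hcard : (Finset.univ \ (T ∪ U)).card = Fintype.card α - (T.card + U.card) := by
    rw [Finset.card_sdiff_of_subset hsub, Finset.card_union_of_disjoint hTU, Finset.card_univ]
  rw [← hcard, ← Finset.card_powersetCard]
  apply Finset.card_nbij' (fun s => s \ T) (fun t => t ∪ T)
  · intro s hs
    simp only [Finset.mem_coe, Finset.mem_filter, Finset.mem_univ, true_and] at hs
    obtain ⟨hk, hTs, hsU⟩ := hs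
    rw [Finset.mem_coe, Finset.mem_powersetCard]
    constructor
    · intro x hx
      simp only [Finset.mem_sdiff] at hx ⊢
      exact ⟨Finset.mem_univ x, by
        simp only [Finset.mem_union]
        push_neg
        exact ⟨hx.2, Finset.disjoint_left.mp hsU hx.1⟩⟩
    · rw [Finset.card_sdiff_of_subset hTs, hk]
  · intro t ht
    rw [Finset.mem_coe, Finset.mem_powersetCard] at ht
    obtain ⟨hts, htc⟩ := ht
    have htT : Disjoint t T := by
      refine Finset.disjoint_left.mpr fun x hx hxT => ?_
      have := hts hx
      simp only [Finset.mem_sdiff, Finset.mem_union] at this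
      exact this.2 (Or.inl hxT)
    have htU : Disjoint t U := by
      refine Finset.disjoint_left.mpr fun x hx hxU => ?_
      have := hts hx
      simp only [Finset.mem_sdiff, Finset.mem_union] at this
      exact this.2 (Or.inr hxU)
    simp only [Finset.mem_coe, Finset.mem_filter, Finset.mem_univ, true_and]
    refine ⟨?_, Finset.subset_union_right, ?_⟩
    · rw [Finset.card_union_of_disjoint htT, htc]
      omega
    · exact Finset.disjoint_union_left.mpr ⟨htU, hTU⟩
  · intro s hs
    simp only [Finset.mem_coe, Finset.mem_filter, Finset.mem_univ, true_and] at hs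
    exact Finset.sdiff_union_of_subset hs.2.1
  · intro t ht
    rw [Finset.mem_coe, Finset.mem_powersetCard] at ht
    have htT : Disjoint t T := by
      refine Finset.disjoint_left.mpr fun x hx hxT => ?_
      have := ht.1 hx
      simp only [Finset.mem_sdiff, Finset.mem_union] at this
      exact this.2 (Or.inl hxT)
    beta_reduce
    rw [Finset.union_sdiff_right, Finset.sdiff_eq_self_of_disjoint htT]


lemma core_shared (n k : ℕ) (hk1 : 1 < k) (hk2 : k < n - 1)
    (x y z : Fin n) (hxy : x ≠ y) (hxz : x ≠ z) (hyz : y ≠ z) :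
    (Finset.univ.filter (fun s : Finset (Fin n) => s.card = k ∧
      ((x ∈ s ∧ y ∉ s) ∨ (y ∈ s ∧ x ∉ s)) ∧ ((x ∈ s ∧ z ∉ s) ∨ (z ∈ s ∧ x ∉ s)))).card
      = (n - 2).choose (k - 1) := by
  have hsplit : (Finset.univ.filter (fun s : Finset (Fin n) => s.card = k ∧
      ((x ∈ s ∧ y ∉ s) ∨ (y ∈ s ∧ x ∉ s)) ∧ ((x ∈ s ∧ z ∉ s) ∨ (z ∈ s ∧ x ∉ s))))
      = (Finset.univ.filter (fun s : Finset (Fin n) => s.card = k ∧ ({x} : Finset (Fin n)) ⊆ s ∧ Disjoint s {y, z}))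
        ∪ (Finset.univ.filter (fun s : Finset (Fin n) => s.card = k ∧ ({y, z} : Finset (Fin n)) ⊆ s ∧ Disjoint s {x})) := by
    rw [← Finset.filter_or]
    apply Finset.filter_congr
    intro s _
    simp only [Finset.singleton_subset_iff, Finset.insert_subset_iff,
      Finset.disjoint_insert_right, Finset.disjoint_singleton_right]
    tauto
  have c1 : ({x} : Finset (Fin n)).card = 1 := Finset.card_singleton x
  have c2 : ({y, z} : Finset (Fin n)).card = 2 := by
    rw [Finset.card_insert_of_notMem (by simp [hyz]), Finset.card_singleton]
  have d1 : Disjoint ({x} : Finset (Fin n)) {y, z} := by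
    simp only [Finset.disjoint_insert_right, Finset.disjoint_singleton_right,
      Finset.mem_singleton]
    exact ⟨fun h => hxy h.symm, fun h => hxz h.symm⟩
  rw [hsplit, Finset.card_union_of_disjoint]
  · rw [aux_count k {x} {y, z} d1 (by rw [c1]; omega),
      aux_count k {y, z} {x} d1.symm (by rw [c2]; omega), c1, c2, Fintype.card_fin]
    obtain ⟨k', rfl⟩ : ∃ k', k = k' + 2 := ⟨k - 2, by omega⟩
    obtain ⟨n', rfl⟩ : ∃ n', n = n' + 4 := ⟨n - 4, by omega⟩
    have e1 : n' + 4 - (1 + 2) = n' + 1 := by omega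
    have e2 : n' + 4 - (2 + 1) = n' + 1 := by omega
    have e3 : k' + 2 - 1 = k' + 1 := by omega
    have e4 : k' + 2 - 2 = k' := by omega
    have e5 : n' + 4 - 2 = n' + 2 := by omega
    simp only [e1, e2, e3, e4, e5]
    rw [Nat.choose_succ_succ (n' + 1) k']
    simp only [Nat.succ_eq_add_one]
    omega
  · refine Finset.disjoint_left.mpr fun s hs1 hs2 => ?_
    simp only [Finset.mem_filter, Finset.singleton_subset_iff, Finset.insert_subset_iff,
      Finset.disjoint_insert_right, Finset.disjoint_singleton_right] at hs1 hs2
    exact hs2.2.2.2 hs1.2.2.1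

set_option maxHeartbeats 1000000 in
lemma core_disjoint (n k : ℕ) (hk1 : 1 < k) (hk2 : k < n - 1)
    (x y z w : Fin n) (hxy : x ≠ y) (hxz : x ≠ z) (hxw : x ≠ w)
    (hyz : y ≠ z) (hyw : y ≠ w) (hzw : z ≠ w) :
    (Finset.univ.filter (fun s : Finset (Fin n) => s.card = k ∧
      ((x ∈ s ∧ y ∉ s) ∨ (y ∈ s ∧ x ∉ s)) ∧ ((z ∈ s ∧ w ∉ s) ∨ (w ∈ s ∧ z ∉ s)))).card
      = 4 * (n - 4).choose (k - 2) := by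
  have hsplit : (Finset.univ.filter (fun s : Finset (Fin n) => s.card = k ∧
      ((x ∈ s ∧ y ∉ s) ∨ (y ∈ s ∧ x ∉ s)) ∧ ((z ∈ s ∧ w ∉ s) ∨ (w ∈ s ∧ z ∉ s))))
      = (Finset.univ.filter (fun s : Finset (Fin n) => s.card = k ∧ ({x, z} : Finset (Fin n)) ⊆ s ∧ Disjoint s {y, w}))
        ∪ ((Finset.univ.filter (fun s : Finset (Fin n) => s.card = k ∧ ({x, w} : Finset (Fin n)) ⊆ s ∧ Disjoint s {y, z}))
        ∪ ((Finset.univ.filter (fun s : Finset (Fin n) => s.card = k ∧ ({y, z} : Finset (Fin n)) ⊆ s ∧ Disjoint s {x, w}))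
        ∪ (Finset.univ.filter (fun s : Finset (Fin n) => s.card = k ∧ ({y, w} : Finset (Fin n)) ⊆ s ∧ Disjoint s {x, z})))) := by
    rw [← Finset.filter_or, ← Finset.filter_or, ← Finset.filter_or]
    apply Finset.filter_congr
    intro s _
    simp only [Finset.insert_subset_iff, Finset.singleton_subset_iff,
      Finset.disjoint_insert_right, Finset.disjoint_singleton_right]
    by_cases hx : x ∈ s <;> by_cases hz : z ∈ s <;> simp [hx, hz] <;> tauto
  have dd : ∀ (a b : Fin n), a ≠ b → ({a, b} : Finset (Fin n)).card = 2 := by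
    intro a b hab
    rw [Finset.card_insert_of_notMem (by simp [hab]), Finset.card_singleton]
  have key : ∀ (a b c d : Fin n), a ≠ b → a ≠ c → a ≠ d → b ≠ c → b ≠ d → c ≠ d →
      (Finset.univ.filter (fun s : Finset (Fin n) => s.card = k ∧ ({a, b} : Finset (Fin n)) ⊆ s ∧ Disjoint s {c, d})).card
      = (n - 4).choose (k - 2) := by
    intro a b c d hab hac had hbc hbd hcd
    have hdTU : Disjoint ({a, b} : Finset (Fin n)) {c, d} := by
      simp only [Finset.disjoint_insert_right, Finset.disjoint_singleton_right,
        Finset.mem_insert, Finset.mem_singleton]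
      push_neg
      exact ⟨⟨fun h => hac h.symm, fun h => hbc h.symm⟩,
        fun h => had h.symm, fun h => hbd h.symm⟩
    rw [aux_count k {a, b} {c, d} hdTU (by rw [dd a b hab]; omega),
      dd a b hab, dd c d hcd, Fintype.card_fin]
  have hdisj : ∀ (p q : Finset (Fin n) → Prop) [DecidablePred p] [DecidablePred q],
      (∀ s, p s → q s → False) →
      Disjoint (Finset.univ.filter p) (Finset.univ.filter q) := by
    intro p q _ _ h
    refine Finset.disjoint_left.mpr fun s hs1 hs2 => ?_
    simp only [Finset.mem_filter] at hs1 hs2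
    exact h s hs1.2 hs2.2
  have sub2 : ∀ (a b : Fin n) (s : Finset (Fin n)), ({a, b} : Finset (Fin n)) ⊆ s ↔ a ∈ s ∧ b ∈ s := by
    intro a b s; simp [Finset.insert_subset_iff]
  have dis2 : ∀ (a b : Fin n) (s : Finset (Fin n)), Disjoint s ({a, b} : Finset (Fin n)) ↔ a ∉ s ∧ b ∉ s := by
    intro a b s; simp [Finset.disjoint_insert_right, Finset.disjoint_singleton_right]
  rw [hsplit, Finset.card_union_of_disjoint, Finset.card_union_of_disjoint,
    Finset.card_union_of_disjoint]
  · rw [key x z y w hxz hxy hxw hyz.symm hzw hyw,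
      key x w y z hxw hxy hxz hyw.symm hzw.symm hyz,
      key y z x w hyz hxy.symm hyw hxz.symm hzw hxw,
      key y w x z hyw hxy.symm hyz hxw.symm hzw.symm hxz]
    ring
  · refine hdisj _ _ fun s h1 h2 => ?_
    rw [sub2, dis2] at h1 h2
    tauto
  · refine Finset.disjoint_union_right.mpr ⟨?_, ?_⟩ <;>
      refine hdisj _ _ fun s h1 h2 => ?_ <;> rw [sub2, dis2] at h1 h2 <;> tauto
  · refine Finset.disjoint_union_right.mpr ⟨?_, Finset.disjoint_union_right.mpr ⟨?_, ?_⟩⟩ <;>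
      refine hdisj _ _ fun s h1 h2 => ?_ <;> rw [sub2, dis2] at h1 h2 <;> tauto

set_option maxHeartbeats 1000000 in
theorem stmt_8 (n k : ℕ) (hk1 : 1 < k) (hk2 : k < n - 1)
    (i j i' j' : Fin n) (hij : i ≠ j) (hij' : i' ≠ j')
    (hne : ({i, j} : Finset (Fin n)) ≠ {i', j'})
    (C : Fin n → Fin n → Set (Finset (Fin n)))
    (hC : ∀ a b : Fin n, C a b =
      {s : Finset (Fin n) | s.card = k ∧ ((a ∈ s ∧ b ∉ s) ∨ (b ∈ s ∧ a ∉ s))}) :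
    ((({i, j} : Finset (Fin n)) ∩ {i', j'}).Nonempty →
        (C i j ∩ C i' j').ncard = Nat.choose (n - 2) (k - 1)) ∧
      ((({i, j} : Finset (Fin n)) ∩ {i', j'}) = ∅ →
        (C i j ∩ C i' j').ncard = 4 * Nat.choose (n - 4) (k - 2)) := by
  have hcc : ∀ {p q : Finset (Fin n) → Prop} [DecidablePred p] [DecidablePred q],
      (∀ s, p s ↔ q s) → (Finset.univ.filter p).card = (Finset.univ.filter q).card := by
    intro p q _ _ h
    rw [Finset.filter_congr fun s _ => h s]
  have hset : C i j ∩ C i' j' = ↑(Finset.univ.filter (fun s : Finset (Fin n) => s.card = k ∧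
      ((i ∈ s ∧ j ∉ s) ∨ (j ∈ s ∧ i ∉ s)) ∧ ((i' ∈ s ∧ j' ∉ s) ∨ (j' ∈ s ∧ i' ∉ s)))) := by
    rw [hC, hC]
    ext s
    simp only [Set.mem_inter_iff, Set.mem_setOf_eq, Finset.coe_filter, Finset.mem_univ,
      true_and]
    tauto
  rw [hset, Set.ncard_coe_finset]
  constructor
  · intro hnon
    obtain ⟨a, ha⟩ := hnon
    rw [Finset.mem_inter, Finset.mem_insert, Finset.mem_insert, Finset.mem_singleton,
      Finset.mem_singleton] at ha
    obtain ⟨h1, h2⟩ := ha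
    rcases h1 with rfl | rfl <;> rcases h2 with h2 | h2
    · subst h2
      have h3 : j ≠ j' := fun h => hne (by rw [h])
      have := core_shared n k hk1 hk2 a j j' hij hij' h3
      refine Eq.trans ?_ this
      exact hcc fun s => by tauto
    · subst h2
      have h3 : j ≠ i' := fun h => hne (by rw [h]; exact Finset.pair_comm a i')
      have := core_shared n k hk1 hk2 a j i' hij hij'.symm h3
      refine Eq.trans ?_ this
      exact hcc fun s => by tauto
    · subst h2
      have h3 : i ≠ j' := fun h => hne (by rw [h]; exact Finset.pair_comm j' a)
      have := core_shared n k hk1 hk2 a i j' hij.symm hij' h3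
      refine Eq.trans ?_ this
      exact hcc fun s => by tauto
    · subst h2
      have h3 : i ≠ i' := fun h => hne (by rw [h])
      have := core_shared n k hk1 hk2 a i i' hij.symm hij'.symm h3
      refine Eq.trans ?_ this
      exact hcc fun s => by tauto
  · intro hemp
    have hmem := Finset.eq_empty_iff_forall_notMem.mp hemp
    have h1 : i ≠ i' := fun h => hmem i (Finset.mem_inter.mpr ⟨by simp, by rw [h]; simp⟩)
    have h2 : i ≠ j' := fun h => hmem i (Finset.mem_inter.mpr ⟨by simp, by rw [h]; simp⟩)
    have h3 : j ≠ i' := fun h => hmem j (Finset.mem_inter.mpr ⟨by simp, by rw [h]; simp⟩)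
    have h4 : j ≠ j' := fun h => hmem j (Finset.mem_inter.mpr ⟨by simp, by rw [h]; simp⟩)
    exact core_disjoint n k hk1 hk2 i j i' j' hij h1 h2 h3 h4 hij'
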